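/- arXiv:2012.15620 — 2 statements merged into one kernel-verified Lean document; each statement's English description precedes it below -/
import Mathlib

section
/- The face poset of the Voronoi cell Vor_F(O) of the origin (the set of nonempty faces of the polytope Vor_F(O), ordered by inclusion) is isomorphic, as a partially ordered set, to the poset CAC of coherent acyclic orientations of cut subgraphs of G. -/
open Finset
open scoped Classical

structure Multigraph (V E : Type) where
  tail : E → V
  head : E → V
  loopless : ∀ e, tail e ≠ head e

namespace Multigraph

variable {V E : Type}

/-- The simple graph of adjacency underlying a multigraph. -/
def adjG (G : Multigraph V E) : SimpleGraph V :=
  SimpleGraph.fromRel (fun u v => ∃ e, G.tail e = u ∧ G.head e = v)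

/-- A multigraph is connected if its adjacency graph is. -/
def Conn (G : Multigraph V E) : Prop := G.adjG.Connected

/-- Tail of an oriented edge `(e, b)`. -/
def otail (G : Multigraph V E) (oe : E × Bool) : V :=
  if oe.2 then G.tail oe.1 else G.head oe.1

/-- Head of an oriented edge `(e, b)`. -/
def ohead (G : Multigraph V E) (oe : E × Bool) : V :=
  if oe.2 then G.head oe.1 else G.tail oe.1

/-- The coboundary map `d : C⁰(G,A) → C¹(G,A)`, where `C¹(G,A)` is identified with
`E → A` via a fixed reference orientation of each edge. -/
def dm (G : Multigraph V E) {A : Type} [Ring A] (f : V → A) : E → A :=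
  fun e => f (G.head e) - f (G.tail e)

end Multigraph

/-- Value of an element of `C¹(G,A)` on an oriented edge. -/
def oval {E A : Type} [Neg A] (g : E → A) (oe : E × Bool) : A :=
  if oe.2 then g oe.1 else -g oe.1

variable {V E : Type} [Fintype V] [Fintype E] [DecidableEq V] [DecidableEq E]

/-- The cut space `F_ℝ = d(C⁰(G,ℝ)) ⊆ C¹(G,ℝ)`. -/
def FR (G : Multigraph V E) : Set (E → ℝ) := Set.range (G.dm (A := ℝ))

/-- The cut lattice `F_ℤ`, viewed inside `C¹(G,ℝ)`. -/
def FZr (G : Multigraph V E) : Set (E → ℝ) :=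
  {g | ∃ f : V → ℤ, g = G.dm fun v => (f v : ℝ)}

/-- The Euclidean norm on `C¹(G,ℝ)`. -/
noncomputable def enorm (x : E → ℝ) : ℝ := Real.sqrt (∑ e, x e ^ 2)

/-- The Voronoi cell of `β ∈ F_ℤ` inside `F_ℝ`. -/
noncomputable def VorF (G : Multigraph V E) (β : E → ℝ) : Set (E → ℝ) :=
  {x | x ∈ FR G ∧ ∀ α ∈ FZr G, _root_.enorm (x - β) ≤ _root_.enorm (x - α)}

/-- A set of oriented edges is a coherent acyclic orientation of a cut subgraph of `G`
if it is induced by an ordered partition of `V` into nonempty parts `V_0 < ⋯ < V_{k-1}`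
(encoded by a surjection `P : V → Fin k`): its oriented edges are exactly those going
from a part to a strictly higher part. -/
def IsCAC (G : Multigraph V E) (D : Set (E × Bool)) : Prop :=
  ∃ (k : ℕ) (P : V → Fin k), Function.Surjective P ∧
    D = {oe : E × Bool | P (G.otail oe) < P (G.ohead oe)}

set_option linter.unusedSectionVars false
set_option linter.unusedVariables false
noncomputable section Aux

namespace S10

variable {ι : Type} [Fintype ι] [DecidableEq ι]

/-- inner product on functions -/
def ip (x y : ι → ℝ) : ℝ := ∑ i, x i * y i

lemma ip_comm (x y : ι → ℝ) : ip x y = ip y x :=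
  Finset.sum_congr rfl fun i _ => mul_comm _ _

lemma ip_add_right (x y z : ι → ℝ) : ip x (y + z) = ip x y + ip x z := by
  unfold ip; rw [← Finset.sum_add_distrib]
  exact Finset.sum_congr rfl fun i _ => by simp [Pi.add_apply]; ring

lemma ip_sub_right (x y z : ι → ℝ) : ip x (y - z) = ip x y - ip x z := by
  unfold ip; rw [← Finset.sum_sub_distrib]
  exact Finset.sum_congr rfl fun i _ => by simp [Pi.sub_apply]; ring

lemma ip_smul_right (x y : ι → ℝ) (a : ℝ) : ip x (a • y) = a * ip x y := by
  unfold ip; rw [Finset.mul_sum]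
  exact Finset.sum_congr rfl fun i _ => by simp [Pi.smul_apply, smul_eq_mul]; ring

lemma ip_add_left (x y z : ι → ℝ) : ip (x + y) z = ip x z + ip y z := by
  rw [ip_comm, ip_add_right, ip_comm z x, ip_comm z y]

lemma ip_sub_left (x y z : ι → ℝ) : ip (x - y) z = ip x z - ip y z := by
  rw [ip_comm, ip_sub_right, ip_comm z x, ip_comm z y]

lemma ip_smul_left (x y : ι → ℝ) (a : ℝ) : ip (a • x) y = a * ip x y := by
  rw [ip_comm, ip_smul_right, ip_comm y x]

lemma ip_zero_left (y : ι → ℝ) : ip 0 y = 0 := by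
  unfold ip; exact Finset.sum_eq_zero fun i _ => by simp

lemma ip_self_nonneg (x : ι → ℝ) : 0 ≤ ip x x :=
  Finset.sum_nonneg fun i _ => mul_self_nonneg _

lemma eq_zero_of_ip_self {x : ι → ℝ} (h : ip x x = 0) : x = 0 := by
  funext i
  have := (Finset.sum_eq_zero_iff_of_nonneg (fun i _ => mul_self_nonneg (x i))).1 h i
    (Finset.mem_univ i)
  simpa [mul_self_eq_zero] using this

lemma single_eq_smul (i : ι) (c : ℝ) : (Pi.single i c : ι → ℝ) = c • (Pi.single i (1:ℝ) : ι → ℝ) := by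
  funext j
  by_cases h : j = i <;> simp [Pi.single_apply, h]

lemma lin_eq (l : (ι → ℝ) →ₗ[ℝ] ℝ) (y : ι → ℝ) :
    l y = ∑ i, y i * l (Pi.single i 1) := by
  conv_lhs => rw [← Finset.univ_sum_single y]
  rw [map_sum]
  exact Finset.sum_congr rfl fun i _ => by rw [single_eq_smul, map_smul, smul_eq_mul]

lemma ip_sum_left {κ : Type} [Fintype κ] (c : κ → ℝ) (z : κ → ι → ℝ) (y : ι → ℝ) :
    ip (∑ j, c j • z j) y = ∑ j, c j * ip (z j) y := by
  unfold ip
  have h : ∀ i, (∑ j, c j • z j) i = ∑ j, c j * z j i := fun i => by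
    rw [Finset.sum_apply]; exact Finset.sum_congr rfl fun j _ => rfl
  calc ∑ i, (∑ j, c j • z j) i * y i = ∑ i, ∑ j, c j * z j i * y i := by
        exact Finset.sum_congr rfl fun i _ => by rw [h, Finset.sum_mul]
    _ = ∑ j, ∑ i, c j * z j i * y i := Finset.sum_comm
    _ = ∑ j, c j * ∑ i, z j i * y i := by
        exact Finset.sum_congr rfl fun j _ => by rw [Finset.mul_sum]; exact Finset.sum_congr rfl fun i _ => by ring



variable {V E : Type} [Fintype V] [Fintype E] [DecidableEq V] [DecidableEq E]

/-- the coboundary as a linear map -/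
def dmL (G : Multigraph V E) : (V → ℝ) →ₗ[ℝ] (E → ℝ) where
  toFun := G.dm
  map_add' f g := funext fun e => by simp [Multigraph.dm]; ring
  map_smul' a f := funext fun e => by simp [Multigraph.dm, smul_eq_mul]; ring

lemma dm_sum (G : Multigraph V E) (f : V → ℝ) :
    G.dm f = ∑ v, f v • G.dm (Pi.single v 1) := by
  have h : f = ∑ v, f v • (Pi.single v (1:ℝ) : V → ℝ) := by
    conv_lhs => rw [← Finset.univ_sum_single f]
    exact Finset.sum_congr rfl fun v _ => single_eq_smul v (f v)
  calc G.dm f = dmL G f := rfl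
    _ = dmL G (∑ v, f v • (Pi.single v (1:ℝ) : V → ℝ)) := by rw [← h]
    _ = ∑ v, f v • dmL G (Pi.single v 1) := by
          rw [map_sum]
          exact Finset.sum_congr rfl fun v _ => by rw [map_smul]
    _ = ∑ v, f v • G.dm (Pi.single v 1) := rfl

lemma ip_dm (G : Multigraph V E) (f : V → ℝ) (y : E → ℝ) :
    ip (G.dm f) y = ∑ v, f v * ip (G.dm (Pi.single v 1)) y := by
  rw [dm_sum, ip_sum_left]

lemma exists_ortho (G : Multigraph V E) (c : E → ℝ) :
    ∃ g : V → ℝ, ∀ f : V → ℝ, ip (G.dm f) (c - G.dm g) = 0 := by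
  set T : (V → ℝ) →ₗ[ℝ] (V → ℝ) :=
    { toFun := fun g v => ip (G.dm (Pi.single v 1)) (G.dm g)
      map_add' := fun a b => funext fun v => by
        show ip (G.dm (Pi.single v 1)) (G.dm (a + b)) = ip _ (G.dm a) + ip _ (G.dm b)
        rw [show G.dm (a + b) = G.dm a + G.dm b from map_add (dmL G) a b, ip_add_right]
      map_smul' := fun r a => funext fun v => by
        show ip (G.dm (Pi.single v 1)) (G.dm (r • a)) = r * ip _ (G.dm a)
        rw [show G.dm (r • a) = r • G.dm a from map_smul (dmL G) r a, ip_smul_right] }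
    with hT
  have hbmem : (fun v => ip (G.dm (Pi.single v 1)) c) ∈ LinearMap.range T := by
    by_contra hb
    obtain ⟨φ, hφb, hφ0⟩ := Submodule.exists_dual_map_eq_bot_of_notMem hb inferInstance
    set h : V → ℝ := fun v => φ (Pi.single v 1) with hh
    have hker : ∀ y ∈ LinearMap.range T, φ y = 0 := by
      intro y hy
      have : φ y ∈ (LinearMap.range T).map φ := Submodule.mem_map_of_mem hy
      rw [hφ0] at this; simpa using this
    have hTg : ∀ g, φ (T g) = ip (G.dm h) (G.dm g) := by
      intro g
      rw [lin_eq φ (T g)]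
      calc ∑ v, T g v * φ (Pi.single v 1)
          = ∑ v, h v * ip (G.dm (Pi.single v 1)) (G.dm g) :=
            Finset.sum_congr rfl fun v _ => by rw [show T g v = ip (G.dm (Pi.single v 1)) (G.dm g) from rfl]; ring
        _ = ip (G.dm h) (G.dm g) := (ip_dm G h (G.dm g)).symm
    have hdh : G.dm h = 0 := by
      have h0 := hker (T h) ⟨h, rfl⟩
      rw [hTg h] at h0
      exact eq_zero_of_ip_self h0
    have hzero : φ (fun v => ip (G.dm (Pi.single v 1)) c) = 0 := by
      rw [lin_eq φ]
      have : ∑ v, ip (G.dm (Pi.single v 1)) c * φ (Pi.single v 1) = ip (G.dm h) c := by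
        rw [ip_dm G h c]
        exact Finset.sum_congr rfl fun v _ => by ring
      rw [this, hdh, ip_zero_left]
    exact hφb hzero
  obtain ⟨g, hg⟩ := hbmem
  refine ⟨g, fun f => ?_⟩
  have hv : ∀ v, ip (G.dm (Pi.single v 1)) (c - G.dm g) = 0 := by
    intro v
    have hgv : ip (G.dm (Pi.single v 1)) (G.dm g) = ip (G.dm (Pi.single v 1)) c := congrFun hg v
    rw [ip_sub_right, hgv, sub_self]
  rw [ip_dm]
  exact Finset.sum_eq_zero fun v _ => by rw [hv v, mul_zero]

/-- orthogonal projection onto the cut space -/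
def pr (G : Multigraph V E) (c : E → ℝ) : E → ℝ :=
  G.dm (Classical.choose (exists_ortho G c))

lemma pr_mem (G : Multigraph V E) (c : E → ℝ) : ∃ f, G.dm f = pr G c :=
  ⟨_, rfl⟩

lemma pr_spec (G : Multigraph V E) (c : E → ℝ) :
    ∀ f : V → ℝ, ip (G.dm f) (c - pr G c) = 0 :=
  Classical.choose_spec (exists_ortho G c)

lemma ortho_unique {G : Multigraph V E} {c x x' : E → ℝ}
    (hx : ∃ f, G.dm f = x) (hx' : ∃ f, G.dm f = x')
    (h1 : ∀ f, ip (G.dm f) (c - x) = 0) (h2 : ∀ f, ip (G.dm f) (c - x') = 0) :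
    x = x' := by
  obtain ⟨a, ha⟩ := hx; obtain ⟨b, hb⟩ := hx'
  have hab : G.dm (a - b) = x - x' := by
    rw [show G.dm (a - b) = G.dm a - G.dm b from map_sub (dmL G) a b, ha, hb]
  have h3 : ip (G.dm (a - b)) (x - x') = 0 := by
    have hxx : x - x' = (c - x') - (c - x) := by abel
    rw [hxx, ip_sub_right, h1 (a - b), h2 (a - b), sub_zero]
  rw [hab] at h3
  have := eq_zero_of_ip_self h3
  exact sub_eq_zero.1 this

lemma pr_eq_self {G : Multigraph V E} {c : E → ℝ} (h : ∃ f, G.dm f = c) : pr G c = c :=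
  ortho_unique (pr_mem G c) h (pr_spec G c) (fun f => by rw [sub_self]; simp [ip])

lemma ip_dm_pr (G : Multigraph V E) (f : V → ℝ) (c : E → ℝ) :
    ip (G.dm f) (pr G c) = ip (G.dm f) c := by
  have := pr_spec G c f
  rw [ip_sub_right] at this
  linarith

lemma ip_pr_dm (G : Multigraph V E) (f : V → ℝ) (c : E → ℝ) :
    ip (pr G c) (G.dm f) = ip c (G.dm f) := by
  rw [ip_comm, ip_dm_pr, ip_comm]

lemma pr_add (G : Multigraph V E) (c c' : E → ℝ) :
    pr G (c + c') = pr G c + pr G c' := by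
  refine ortho_unique (pr_mem G _) ?_ (pr_spec G _) ?_
  · obtain ⟨a, ha⟩ := pr_mem G c; obtain ⟨b, hb⟩ := pr_mem G c'
    exact ⟨a + b, by rw [show G.dm (a+b) = G.dm a + G.dm b from map_add (dmL G) a b, ha, hb]⟩
  · intro f
    have h : c + c' - (pr G c + pr G c') = (c - pr G c) + (c' - pr G c') := by abel
    rw [h, ip_add_right, pr_spec G c f, pr_spec G c' f, add_zero]

lemma pr_smul (G : Multigraph V E) (a : ℝ) (c : E → ℝ) :
    pr G (a • c) = a • pr G c := by
  refine ortho_unique (pr_mem G _) ?_ (pr_spec G _) ?_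
  · obtain ⟨b, hb⟩ := pr_mem G c
    exact ⟨a • b, by rw [show G.dm (a • b) = a • G.dm b from map_smul (dmL G) a b, hb]⟩
  · intro f
    have h : a • c - a • pr G c = a • (c - pr G c) := by
      rw [smul_sub]
    rw [h, ip_smul_right, pr_spec G c f, mul_zero]

/-- projection as a linear map -/
def prL (G : Multigraph V E) : (E → ℝ) →ₗ[ℝ] (E → ℝ) where
  toFun := pr G
  map_add' := pr_add G
  map_smul' := pr_smul G



variable {G : Multigraph V E}

/-- the cube [-1/2,1/2]^E -/
def cube : Set (E → ℝ) := {c | ∀ e, |c e| ≤ 1/2}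

lemma cube_convex : Convex ℝ (cube (E := E)) := by
  intro c hc c' hc' a b ha hb hab
  intro e
  have : (a • c + b • c') e = a * c e + b * c' e := rfl
  rw [this]
  calc |a * c e + b * c' e| ≤ |a * c e| + |b * c' e| := abs_add_le _ _
    _ = a * |c e| + b * |c' e| := by rw [abs_mul, abs_mul, abs_of_nonneg ha, abs_of_nonneg hb]
    _ ≤ a * (1/2) + b * (1/2) := by
        gcongr
        exact hc e
        exact hc' e
    _ = 1/2 := by rw [← add_mul, hab, one_mul]

lemma cube_compact : IsCompact (cube (E := E)) := by
  have h : cube (E := E) = Set.pi Set.univ (fun _ : E => Set.Icc (-(1/2) : ℝ) (1/2)) := by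
    ext c
    simp only [cube, Set.mem_setOf_eq, Set.mem_pi, Set.mem_univ, forall_true_left, Set.mem_Icc]
    exact forall_congr' fun e => abs_le
  rw [h]
  exact isCompact_univ_pi fun _ => isCompact_Icc

/-- squared norm -/
lemma enorm_le_enorm_iff (u w : E → ℝ) : _root_.enorm u ≤ _root_.enorm w ↔ ip u u ≤ ip w w := by
  unfold _root_.enorm
  have hu : ∑ e, u e ^ 2 = ip u u := Finset.sum_congr rfl fun e _ => by rw [sq]
  have hw : ∑ e, w e ^ 2 = ip w w := Finset.sum_congr rfl fun e _ => by rw [sq]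
  rw [hu, hw]
  exact Real.sqrt_le_sqrt_iff (ip_self_nonneg w)

lemma vor_iff (x : E → ℝ) :
    x ∈ VorF G 0 ↔ (∃ f, G.dm f = x) ∧ ∀ α ∈ FZr G, 2 * ip x α ≤ ip α α := by
  unfold VorF
  constructor
  · rintro ⟨hx1, hx2⟩
    refine ⟨hx1, fun α hα => ?_⟩
    have := hx2 α hα
    rw [sub_zero, enorm_le_enorm_iff] at this
    have hexp : ip (x - α) (x - α) = ip x x - 2 * ip x α + ip α α := by
      rw [ip_sub_left, ip_sub_right, ip_sub_right, ip_comm α x]; ring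
    rw [hexp] at this; linarith
  · rintro ⟨hx1, hx2⟩
    refine ⟨hx1, fun α hα => ?_⟩
    rw [sub_zero, enorm_le_enorm_iff]
    have hexp : ip (x - α) (x - α) = ip x x - 2 * ip x α + ip α α := by
      rw [ip_sub_left, ip_sub_right, ip_sub_right, ip_comm α x]; ring
    rw [hexp]
    have := hx2 α hα; linarith

/-- indicator of a finset -/
def chi (S : Finset V) : V → ℝ := fun v => if v ∈ S then 1 else 0

def cutv (G : Multigraph V E) (S : Finset V) : E → ℝ := G.dm (chi S)

lemma cutv_mem_FZr (S : Finset V) : cutv G S ∈ FZr G := by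
  refine ⟨fun v => if v ∈ S then 1 else 0, ?_⟩
  funext e
  simp only [cutv, chi, Multigraph.dm]
  by_cases h1 : G.head e ∈ S <;> by_cases h2 : G.tail e ∈ S <;> simp [h1, h2]

lemma cutv_vals (S : Finset V) (e : E) :
    cutv G S e = 0 ∨ cutv G S e = 1 ∨ cutv G S e = -1 := by
  simp only [cutv, chi, Multigraph.dm]
  by_cases h1 : G.head e ∈ S <;> by_cases h2 : G.tail e ∈ S <;> simp [h1, h2]

lemma cutv_sq (S : Finset V) : ip (cutv G S) (cutv G S) = ∑ e, |cutv G S e| := by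
  refine Finset.sum_congr rfl fun e _ => ?_
  rcases cutv_vals (G := G) S e with h | h | h <;> rw [h] <;> norm_num

/-- the cut inequalities hold on the Voronoi cell -/
lemma vor_cut_ineq {x : E → ℝ} (hx : x ∈ VorF G 0) (S : Finset V) :
    2 * ip x (cutv G S) ≤ ∑ e, |cutv G S e| := by
  rw [← cutv_sq]
  exact ((vor_iff x).1 hx).2 (cutv G S) (cutv_mem_FZr S)

/-- key inequality: `2⟨x, dg⟩ ≤ ‖dg‖₁` for all real g -/
lemma key_ineq {x : E → ℝ} (hx : x ∈ VorF G 0) :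
    ∀ g : V → ℝ, 2 * ip x (G.dm g) ≤ ∑ e, |G.dm g e| := by
  suffices H : ∀ (n : ℕ) (g : V → ℝ), (Finset.univ.image g).card ≤ n →
      2 * ip x (G.dm g) ≤ ∑ e, |G.dm g e| from fun g => H _ g le_rfl
  intro n
  induction n with
  | zero =>
    intro g hg
    have hV : (Finset.univ : Finset V) = ∅ := by
      by_contra h
      obtain ⟨v, hv⟩ := Finset.nonempty_of_ne_empty h
      have : g v ∈ Finset.univ.image g := Finset.mem_image_of_mem g hv
      have := Finset.card_pos.2 ⟨_, this⟩
      omega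
    have hE : ∀ e : E, False := fun e => by
      have : G.tail e ∈ (Finset.univ : Finset V) := Finset.mem_univ _
      rw [hV] at this; exact Finset.notMem_empty _ this
    have h1 : ip x (G.dm g) = 0 := Finset.sum_eq_zero fun e _ => (hE e).elim
    have h2 : (∑ e, |G.dm g e|) = 0 := Finset.sum_eq_zero fun e _ => (hE e).elim
    rw [h1, h2]; norm_num
  | succ n ih =>
    intro g hg
    by_cases h1 : (Finset.univ.image g).card ≤ 1
    · -- G.dm g = 0
      have hconst : ∀ u v : V, g u = g v := by
        intro u v
        have hu : g u ∈ Finset.univ.image g := Finset.mem_image_of_mem g (Finset.mem_univ u)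
        have hv : g v ∈ Finset.univ.image g := Finset.mem_image_of_mem g (Finset.mem_univ v)
        exact Finset.card_le_one.1 h1 _ hu _ hv
      have hdm : G.dm g = 0 := funext fun e => by
        simp only [Multigraph.dm, Pi.zero_apply]
        rw [hconst (G.head e) (G.tail e)]; ring
      rw [hdm]
      have h2 : ip x (0 : E → ℝ) = 0 := by rw [ip_comm]; exact ip_zero_left x
      rw [h2]
      simp
    · push_neg at h1
      set s := Finset.univ.image g with hs
      have hsne : s.Nonempty := Finset.card_pos.1 (by omega)
      set M := s.max' hsne with hM
      set s' := s.erase M with hs'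
      have hs'ne : s'.Nonempty := by
        rw [hs']
        apply Finset.card_pos.1
        rw [Finset.card_erase_of_mem (s.max'_mem hsne)]
        omega
      set M2 := s'.max' hs'ne with hM2
      have hM2mem : M2 ∈ s' := s'.max'_mem hs'ne
      have hM2ne : M2 ≠ M := (Finset.mem_erase.1 hM2mem).1
      have hM2le : M2 ≤ M := s.le_max' M2 (Finset.mem_erase.1 hM2mem).2
      have hlt : M2 < M := lt_of_le_of_ne hM2le hM2ne
      set lam := M - M2 with hlam
      have hlam0 : 0 < lam := by rw [hlam]; linarith
      set S : Finset V := Finset.univ.filter (fun v => g v = M) with hS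
      set g' : V → ℝ := fun v => if g v = M then M2 else g v with hg'
      -- any value of g other than M is ≤ M2
      have hle2 : ∀ v, g v ≠ M → g v ≤ M2 := by
        intro v hv
        apply s'.le_max'
        rw [hs', Finset.mem_erase]
        exact ⟨hv, Finset.mem_image_of_mem g (Finset.mem_univ v)⟩
      -- decomposition of dm g
      have hdec : ∀ e, G.dm g e = G.dm g' e + lam * cutv G S e := by
        intro e
        simp only [Multigraph.dm, cutv, chi, hg', hS, Finset.mem_filter, Finset.mem_univ,
          true_and]
        by_cases hh : g (G.head e) = M <;> by_cases ht : g (G.tail e) = M <;>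
          simp [hh, ht] <;> ring
      -- absolute value decomposition
      have habs : ∀ e, |G.dm g e| = |G.dm g' e| + lam * |cutv G S e| := by
        intro e
        by_cases hh : g (G.head e) = M <;> by_cases ht : g (G.tail e) = M
        · have h1 : G.dm g e = 0 := by simp [Multigraph.dm, hh, ht]
          have h2 : G.dm g' e = 0 := by simp [Multigraph.dm, hg', hh, ht]
          have h3 : cutv G S e = 0 := by
            simp [cutv, chi, Multigraph.dm, hS, hh, ht]
          rw [h1, h2, h3]; simp
        · -- head at max, tail not
          have h3 : cutv G S e = 1 := by
            simp [cutv, chi, Multigraph.dm, hS, hh, ht]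
          have h2 : G.dm g' e = M2 - g (G.tail e) := by simp [Multigraph.dm, hg', hh, ht]
          have h1 : G.dm g e = M - g (G.tail e) := by simp [Multigraph.dm, hh]
          have h4 : 0 ≤ M2 - g (G.tail e) := by have := hle2 _ ht; linarith
          rw [h1, h2, h3, abs_of_nonneg h4, abs_of_nonneg (by linarith : (0:ℝ) ≤ M - g (G.tail e))]
          simp only [hlam, abs_one, abs_neg]; ring
        · -- tail at max, head not
          have h3 : cutv G S e = -1 := by
            simp [cutv, chi, Multigraph.dm, hS, hh, ht]
          have h2 : G.dm g' e = g (G.head e) - M2 := by simp [Multigraph.dm, hg', hh, ht]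
          have h1 : G.dm g e = g (G.head e) - M := by simp [Multigraph.dm, ht]
          have h4 : g (G.head e) - M2 ≤ 0 := by have := hle2 _ hh; linarith
          rw [h1, h2, h3, abs_of_nonpos h4, abs_of_nonpos (by linarith : g (G.head e) - M ≤ 0)]
          simp only [hlam, abs_one, abs_neg]; ring
        · have h3 : cutv G S e = 0 := by
            simp [cutv, chi, Multigraph.dm, hS, hh, ht]
          have h2 : G.dm g' e = G.dm g e := by simp [Multigraph.dm, hg', hh, ht]
          rw [h2, h3]; simp
      -- image of g' is smaller
      have hcard : (Finset.univ.image g').card ≤ n := by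
        have hsub : Finset.univ.image g' ⊆ s' := by
          intro y hy
          obtain ⟨v, _, hv⟩ := Finset.mem_image.1 hy
          rw [hs', Finset.mem_erase]
          by_cases hgv : g v = M
          · rw [hg'] at hv; simp [hgv] at hv
            rw [← hv]
            exact ⟨hM2ne, (Finset.mem_erase.1 hM2mem).2⟩
          · rw [hg'] at hv; simp [hgv] at hv
            rw [← hv]
            exact ⟨hgv, Finset.mem_image_of_mem g (Finset.mem_univ v)⟩
        have := Finset.card_le_card hsub
        have : s'.card = s.card - 1 := Finset.card_erase_of_mem (s.max'_mem hsne)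
        have hsc : s.card ≤ n + 1 := hg
        omega
      -- conclude
      have hdmdec : G.dm g = G.dm g' + lam • cutv G S := funext fun e => by
        rw [hdec e]; rfl
      have hip : ip x (G.dm g) = ip x (G.dm g') + lam * ip x (cutv G S) := by
        rw [hdmdec, ip_add_right, ip_smul_right]
      have hsum : ∑ e, |G.dm g e| = (∑ e, |G.dm g' e|) + lam * ∑ e, |cutv G S e| := by
        rw [Finset.mul_sum, ← Finset.sum_add_distrib]
        exact Finset.sum_congr rfl fun e _ => habs e
      have hih := ih g' hcard
      have hcut := vor_cut_ineq hx S
      rw [hip, hsum]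
      nlinarith [hlam0.le]



lemma FZr_parts {α : E → ℝ} (hα : α ∈ FZr G) :
    (∃ f, G.dm f = α) ∧ ∀ e, ∃ a : ℤ, α e = a := by
  obtain ⟨f, hf⟩ := hα
  constructor
  · exact ⟨fun v => (f v : ℝ), hf.symm⟩
  · intro e
    refine ⟨f (G.head e) - f (G.tail e), ?_⟩
    rw [hf]
    simp [Multigraph.dm]

lemma pr_cube_subset_vor : pr G '' cube ⊆ VorF G 0 := by
  rintro x ⟨c, hc, rfl⟩
  rw [vor_iff]
  refine ⟨pr_mem G c, fun α hα => ?_⟩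
  obtain ⟨⟨fα, hfα⟩, hint⟩ := FZr_parts hα
  have h1 : ip (pr G c) α = ip c α := by
    rw [← hfα, ip_pr_dm]
  rw [h1]
  unfold ip
  rw [Finset.mul_sum]
  apply Finset.sum_le_sum
  intro e _
  obtain ⟨a, ha⟩ := hint e
  have hce := hc e
  rcases eq_or_ne a 0 with h0 | h0
  · rw [ha, h0]; simp
  · have h2 : (1:ℝ) ≤ |α e| := by
      rw [ha, ← Int.cast_abs]
      exact_mod_cast Int.one_le_abs h0
    have h3 : 2 * (c e * α e) ≤ |α e| := by
      have := abs_mul (c e) (α e)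
      have h4 := le_abs_self (c e * α e)
      nlinarith [abs_nonneg (α e)]
    nlinarith [abs_nonneg (α e), sq_abs (α e)]

lemma vor_subset_pr_cube : VorF G 0 ⊆ pr G '' cube := by
  intro x hx
  by_contra hxC
  have hconv : Convex ℝ (pr G '' cube) := by
    have := cube_convex.linear_image (prL G)
    exact this
  have hcont : Continuous (pr G) := by
    have : Continuous (prL G) := (prL G).continuous_of_finiteDimensional
    exact this
  have hclosed : IsClosed (pr G '' cube) := (cube_compact.image hcont).isClosed
  obtain ⟨f, u, hfu, hux⟩ := geometric_hahn_banach_closed_point hconv hclosed hxC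
  set w : E → ℝ := fun e => f (Pi.single e 1) with hw
  have hfeq : ∀ y, f y = ip y w := by
    intro y
    have := lin_eq (f.toLinearMap) y
    simpa [ip] using this
  obtain ⟨g, hg⟩ := pr_mem G w
  obtain ⟨fx, hfx⟩ := ((vor_iff x).1 hx).1
  have hfx2 : f x = ip x (G.dm g) := by
    rw [hfeq, ← hfx, ← ip_dm_pr G fx w, ← hg]
  have hbound : 2 * ip x (G.dm g) ≤ ∑ e, |G.dm g e| := key_ineq hx g
  set cstar : E → ℝ := fun e => if 0 ≤ G.dm g e then (1:ℝ)/2 else -(1/2) with hcstar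
  have hcs : cstar ∈ cube := by
    intro e
    by_cases h : 0 ≤ G.dm g e <;> simp only [hcstar, h, if_true, if_false, abs_neg] <;> rw [abs_of_nonneg (by norm_num : (0:ℝ) ≤ 1/2)]
  have hstar : ip cstar (G.dm g) = (∑ e, |G.dm g e|) / 2 := by
    unfold ip
    rw [Finset.sum_div]
    refine Finset.sum_congr rfl fun e _ => ?_
    by_cases h : 0 ≤ G.dm g e
    · simp only [hcstar, if_pos h]
      rw [abs_of_nonneg h]; ring
    · simp only [hcstar, if_neg h]
      push_neg at h
      rw [abs_of_neg h]; ring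
  have hfa : f (pr G cstar) = (∑ e, |G.dm g e|) / 2 := by
    obtain ⟨gc, hgc⟩ := pr_mem G cstar
    rw [hfeq, ← hgc, ← ip_dm_pr G gc w, ← hg, hgc, ip_pr_dm, hstar]
  have hmem : pr G cstar ∈ pr G '' cube := ⟨cstar, hcs, rfl⟩
  have := hfu _ hmem
  rw [hfa] at this
  rw [hfx2] at hux
  linarith

lemma vor_eq : VorF G 0 = pr G '' (cube : Set (E → ℝ)) :=
  Set.Subset.antisymm vor_subset_pr_cube pr_cube_subset_vor



/-- the orientation induced by a potential `g` -/
def Dg (G : Multigraph V E) (g : V → ℝ) : Set (E × Bool) :=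
  {oe | g (G.otail oe) < g (G.ohead oe)}

/-- the face of the cube corresponding to an orientation `D` -/
def Fbox (D : Set (E × Bool)) : Set (E → ℝ) :=
  {c | (∀ oe ∈ D, oval c oe = 1/2) ∧ c ∈ cube}

/-- the candidate face of the Voronoi cell -/
def BD (G : Multigraph V E) (D : Set (E × Bool)) : Set (E → ℝ) :=
  pr G '' Fbox D

lemma otail_true (e : E) : G.otail (e, true) = G.tail e := rfl
lemma otail_false (e : E) : G.otail (e, false) = G.head e := rfl
lemma ohead_true (e : E) : G.ohead (e, true) = G.head e := rfl
lemma ohead_false (e : E) : G.ohead (e, false) = G.tail e := rfl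
lemma oval_true (c : E → ℝ) (e : E) : oval c (e, true) = c e := rfl
lemma oval_false (c : E → ℝ) (e : E) : oval c (e, false) = -(c e) := rfl

lemma mem_Dg_true (g : V → ℝ) (e : E) :
    (e, true) ∈ Dg G g ↔ g (G.tail e) < g (G.head e) := Iff.rfl

lemma mem_Dg_false (g : V → ℝ) (e : E) :
    (e, false) ∈ Dg G g ↔ g (G.head e) < g (G.tail e) := Iff.rfl

lemma term_le {c : E → ℝ} (hc : c ∈ cube) (e : E) (t : ℝ) : c e * t ≤ |t| / 2 := by
  have h1 : c e * t ≤ |c e * t| := le_abs_self _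
  rw [abs_mul] at h1
  have h2 : |c e| * |t| ≤ (1/2) * |t| := by
    have := hc e
    nlinarith [abs_nonneg t]
  linarith

lemma ip_le_half {c : E → ℝ} (hc : c ∈ cube) (g : V → ℝ) :
    ip c (G.dm g) ≤ (∑ e, |G.dm g e|) / 2 := by
  unfold ip
  rw [Finset.sum_div]
  exact Finset.sum_le_sum fun e _ => term_le hc e _

lemma edge_eq_iff {c : E → ℝ} (hce : |c e| ≤ 1/2) (g : V → ℝ) (e : E) :
    c e * G.dm g e = |G.dm g e| / 2 ↔ ∀ b, (e, b) ∈ Dg G g → oval c (e, b) = 1/2 := by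
  have hdm : G.dm g e = g (G.head e) - g (G.tail e) := rfl
  rcases lt_trichotomy (G.dm g e) 0 with ht | ht | ht
  · have hgt : g (G.head e) < g (G.tail e) := by rw [hdm] at ht; linarith
    have habs : |G.dm g e| = -(G.dm g e) := abs_of_neg ht
    constructor
    · intro hL b hb
      cases b
      · rw [oval_false]
        have : c e * G.dm g e = (-(1/2)) * G.dm g e := by rw [hL, habs]; ring
        have hc : c e = -(1/2) := mul_right_cancel₀ (ne_of_lt ht) this
        rw [hc]; ring
      · exfalso
        rw [mem_Dg_true] at hb
        exact absurd hb (not_lt.2 hgt.le)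
    · intro hR
      have hb : (e, false) ∈ Dg G g := (mem_Dg_false g e).2 hgt
      have := hR false hb
      rw [oval_false] at this
      have hc : c e = -(1/2) := by linarith
      rw [hc, habs]; ring
  · rw [ht]
    have hgt : g (G.head e) = g (G.tail e) := by rw [hdm] at ht; linarith
    constructor
    · intro _ b hb
      exfalso
      cases b
      · rw [mem_Dg_false] at hb; exact absurd hb (by rw [hgt]; exact lt_irrefl _)
      · rw [mem_Dg_true] at hb; exact absurd hb (by rw [hgt]; exact lt_irrefl _)
    · intro _; simp
  · have hgt : g (G.tail e) < g (G.head e) := by rw [hdm] at ht; linarith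
    have habs : |G.dm g e| = G.dm g e := abs_of_pos ht
    constructor
    · intro hL b hb
      cases b
      · exfalso
        rw [mem_Dg_false] at hb
        exact absurd hb (not_lt.2 hgt.le)
      · rw [oval_true]
        have : c e * G.dm g e = (1/2) * G.dm g e := by rw [hL, habs]; ring
        exact mul_right_cancel₀ (ne_of_gt ht) this
    · intro hR
      have hb : (e, true) ∈ Dg G g := (mem_Dg_true g e).2 hgt
      have := hR true hb
      rw [oval_true] at this
      rw [this, habs]; ring

lemma ip_eq_iff {c : E → ℝ} (hc : c ∈ cube) (g : V → ℝ) :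
    ip c (G.dm g) = (∑ e, |G.dm g e|) / 2 ↔ c ∈ Fbox (Dg G g) := by
  unfold ip
  rw [Finset.sum_div]
  rw [Finset.sum_eq_sum_iff_of_le fun e _ => term_le hc e (G.dm g e)]
  constructor
  · intro h
    refine ⟨?_, hc⟩
    rintro ⟨e, b⟩ hb
    exact (edge_eq_iff (hc e) g e).1 (h e (Finset.mem_univ e)) b hb
  · rintro ⟨h, _⟩ e _
    exact (edge_eq_iff (hc e) g e).2 fun b hb => h (e, b) hb

def c0 (D : Set (E × Bool)) : E → ℝ := fun e =>
  if (e, true) ∈ D then 1/2 else if (e, false) ∈ D then -(1/2) else 0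

lemma c0_mem_cube (D : Set (E × Bool)) : c0 D ∈ (cube : Set (E → ℝ)) := by
  intro e
  unfold c0
  split_ifs <;> rw [abs_le] <;> constructor <;> norm_num

lemma c0_mem_Fbox {D : Set (E × Bool)} (hD : ∀ e, ¬((e, true) ∈ D ∧ (e, false) ∈ D)) :
    c0 D ∈ Fbox D := by
  refine ⟨?_, c0_mem_cube D⟩
  rintro ⟨e, b⟩ hb
  cases b
  · have h1 : (e, true) ∉ D := fun h => hD e ⟨h, hb⟩
    rw [oval_false]
    unfold c0
    rw [if_neg h1, if_pos hb]
    ring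
  · rw [oval_true]
    unfold c0
    rw [if_pos hb]

lemma Dg_asym (g : V → ℝ) : ∀ e : E, ¬((e, true) ∈ Dg G g ∧ (e, false) ∈ Dg G g) := by
  rintro e ⟨h1, h2⟩
  rw [mem_Dg_true] at h1
  rw [mem_Dg_false] at h2
  exact lt_asymm h1 h2

lemma BD_eq_argmax (g : V → ℝ) :
    BD G (Dg G g) = {x ∈ VorF G 0 | ∀ y ∈ VorF G 0, ip y (G.dm g) ≤ ip x (G.dm g)} := by
  rw [vor_eq]
  ext x
  constructor
  · rintro ⟨c, hc, rfl⟩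
    have hcc : c ∈ cube := hc.2
    refine ⟨⟨c, hcc, rfl⟩, ?_⟩
    rintro y ⟨c', hc', rfl⟩
    rw [ip_pr_dm, ip_pr_dm]
    calc ip c' (G.dm g) ≤ (∑ e, |G.dm g e|) / 2 := ip_le_half hc' g
      _ = ip c (G.dm g) := ((ip_eq_iff hcc g).2 hc).symm
  · rintro ⟨⟨c, hc, rfl⟩, hmax⟩
    have hc0 : c0 (Dg G g) ∈ Fbox (Dg G g) := c0_mem_Fbox (Dg_asym g)
    have h1 := hmax _ ⟨c0 (Dg G g), hc0.2, rfl⟩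
    rw [ip_pr_dm, ip_pr_dm] at h1
    have h2 : ip (c0 (Dg G g)) (G.dm g) = (∑ e, |G.dm g e|) / 2 :=
      (ip_eq_iff (c0_mem_cube _) g).2 hc0
    have h3 : ip c (G.dm g) = (∑ e, |G.dm g e|) / 2 :=
      le_antisymm (ip_le_half hc g) (by rw [← h2]; exact h1)
    exact ⟨c, (ip_eq_iff hc g).1 h3, rfl⟩

lemma isCAC_Dg (g : V → ℝ) : IsCAC G (Dg G g) := by
  classical
  set s := Finset.univ.image g with hs
  let σ : Fin s.card ≃o {x // x ∈ s} := s.orderIsoOfFin rfl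
  have hmem : ∀ v, g v ∈ s := fun v => Finset.mem_image_of_mem g (Finset.mem_univ v)
  refine ⟨s.card, fun v => σ.symm ⟨g v, hmem v⟩, ?_, ?_⟩
  · intro i
    have hy : (σ i : ℝ) ∈ s := (σ i).2
    obtain ⟨v, _, hv⟩ := Finset.mem_image.1 hy
    refine ⟨v, ?_⟩
    have h2 : (⟨g v, hmem v⟩ : {x // x ∈ s}) = σ i := Subtype.ext hv
    show σ.symm ⟨g v, hmem v⟩ = i
    rw [h2, OrderIso.symm_apply_apply]
  · ext oe
    simp only [Dg, Set.mem_setOf_eq]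
    constructor
    · intro h
      show σ.symm _ < σ.symm _
      rw [OrderIso.lt_iff_lt]
      exact Subtype.mk_lt_mk.2 h
    · intro h
      have h2 := (OrderIso.lt_iff_lt σ.symm).1 h
      exact Subtype.mk_lt_mk.1 h2



/-- a cut is tight on a set of points -/
def Tight (G : Multigraph V E) (B : Set (E → ℝ)) (S : Finset V) : Prop :=
  ∀ x ∈ B, ip x (cutv G S) = (∑ e, |cutv G S e|) / 2

/-- recover the orientation from a face -/
def Drec (G : Multigraph V E) (B : Set (E → ℝ)) : Set (E × Bool) :=
  {oe | ∃ S : Finset V, Tight G B S ∧ G.otail oe ∉ S ∧ G.ohead oe ∈ S}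

lemma cutv_eq (S : Finset V) (e : E) :
    cutv G S e = (if G.head e ∈ S then (1:ℝ) else 0) - (if G.tail e ∈ S then (1:ℝ) else 0) := rfl

lemma drec_BD (g : V → ℝ) : Drec G (BD G (Dg G g)) = Dg G g := by
  ext oe
  constructor
  · -- oe recovered from a tight cut is in Dg g
    rintro ⟨S, hT, htl, hhd⟩
    by_contra hoe
    set c := c0 (Dg G g) with hc
    have hcF : c ∈ Fbox (Dg G g) := c0_mem_Fbox (Dg_asym g)
    have hx := hT (pr G c) ⟨c, hcF, rfl⟩
    rw [show cutv G S = G.dm (chi S) from rfl, ip_pr_dm] at hx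
    have hle : ∀ e ∈ Finset.univ, c e * cutv G S e ≤ |cutv G S e| / 2 :=
      fun e _ => term_le hcF.2 e _
    rw [show ip c (G.dm (chi S)) = ∑ e, c e * cutv G S e from rfl, Finset.sum_div] at hx
    have heq := (Finset.sum_eq_sum_iff_of_le hle).1 hx oe.1 (Finset.mem_univ _)
    -- now analyze the edge oe.1
    rcases Bool.eq_false_or_eq_true oe.2 with hb | hb
    · obtain ⟨e, b⟩ := oe
      simp only at hb; subst hb
      rw [otail_true] at htl
      rw [ohead_true] at hhd
      have hcut : cutv G S e = 1 := by rw [cutv_eq, if_pos hhd, if_neg htl]; ring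
      rw [hcut] at heq
      have hval : c e = 1/2 := by rw [abs_one] at heq; linarith
      rw [hc] at hval
      simp only [c0] at hval
      rw [if_neg hoe] at hval
      by_cases h2 : (e, false) ∈ Dg G g
      · rw [if_pos h2] at hval; norm_num at hval
      · rw [if_neg h2] at hval; norm_num at hval
    · -- oe = (e, false) : tail of oe is head of e
      obtain ⟨e, b⟩ := oe
      simp only at hb; subst hb
      rw [otail_false] at htl
      rw [ohead_false] at hhd
      have hcut : cutv G S e = -1 := by rw [cutv_eq, if_neg htl, if_pos hhd]; ring
      rw [hcut] at heq
      have hval : c e = -(1/2) := by rw [abs_neg, abs_one] at heq; linarith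
      rw [hc] at hval
      simp only [c0] at hval
      by_cases h1 : (e, true) ∈ Dg G g
      · rw [if_pos h1] at hval; norm_num at hval
      · rw [if_neg h1, if_neg hoe] at hval; norm_num at hval
  · -- every oriented edge of Dg g enters a tight cut
    intro hoe
    set S : Finset V := Finset.univ.filter (fun v => g (G.ohead oe) ≤ g v) with hS
    refine ⟨S, ?_, ?_, ?_⟩
    · rintro x ⟨c, hcF, rfl⟩
      rw [show cutv G S = G.dm (chi S) from rfl, ip_pr_dm]
      rw [show ip c (G.dm (chi S)) = ∑ e, c e * cutv G S e from rfl, Finset.sum_div]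
      refine Finset.sum_congr rfl fun e _ => ?_
      show c e * cutv G S e = |cutv G S e| / 2
      have hmemS : ∀ v, v ∈ S ↔ g (G.ohead oe) ≤ g v := by
        intro v; rw [hS]; simp
      by_cases h1 : G.head e ∈ S <;> by_cases h2 : G.tail e ∈ S
      · have : cutv G S e = 0 := by rw [cutv_eq, if_pos h1, if_pos h2]; ring
        rw [this]; simp
      · -- head in S, tail not: edge is oriented up
        have hcut : cutv G S e = 1 := by rw [cutv_eq, if_pos h1, if_neg h2]; ring
        have hlt : g (G.tail e) < g (G.head e) := by
          have ha := (hmemS _).1 h1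
          have hb := (hmemS _).not.1 h2
          push_neg at hb
          linarith
        have hD : (e, true) ∈ Dg G g := (mem_Dg_true g e).2 hlt
        have := hcF.1 _ hD
        rw [oval_true] at this
        rw [hcut, this, abs_one]; ring
      · have hcut : cutv G S e = -1 := by rw [cutv_eq, if_neg h1, if_pos h2]; ring
        have hlt : g (G.head e) < g (G.tail e) := by
          have ha := (hmemS _).1 h2
          have hb := (hmemS _).not.1 h1
          push_neg at hb
          linarith
        have hD : (e, false) ∈ Dg G g := (mem_Dg_false g e).2 hlt
        have := hcF.1 _ hD
        rw [oval_false] at this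
        have hval : c e = -(1/2) := by linarith
        rw [hcut, hval, abs_neg, abs_one]; ring
      · have : cutv G S e = 0 := by rw [cutv_eq, if_neg h1, if_neg h2]; ring
        rw [this]; simp
    · rw [hS]
      simp only [Finset.mem_filter, Finset.mem_univ, true_and, not_le]
      exact hoe
    · rw [hS]
      simp only [Finset.mem_filter, Finset.mem_univ, true_and, le_refl]

lemma BD_antimono {D D' : Set (E × Bool)} (h : D ⊆ D') : BD G D' ⊆ BD G D := by
  rintro x ⟨c, hc, rfl⟩
  exact ⟨c, ⟨fun oe hoe => hc.1 oe (h hoe), hc.2⟩, rfl⟩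

lemma Drec_antimono {B B' : Set (E → ℝ)} (h : B ⊆ B') : Drec G B' ⊆ Drec G B := by
  rintro oe ⟨S, hT, h1, h2⟩
  exact ⟨S, fun x hx => hT x (h hx), h1, h2⟩

lemma cac_is_Dg {D : Set (E × Bool)} (hD : IsCAC G D) : ∃ g : V → ℝ, D = Dg G g := by
  obtain ⟨k, P, _, hP⟩ := hD
  refine ⟨fun v => (P v : ℕ), ?_⟩
  rw [hP]
  ext oe
  simp only [Dg, Set.mem_setOf_eq]
  constructor
  · intro h; exact_mod_cast h
  · intro h; exact_mod_cast h



lemma BD_face {D : Set (E × Bool)} (hD : IsCAC G D) :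
    (BD G D).Nonempty ∧ IsExposed ℝ (VorF G 0) (BD G D) := by
  obtain ⟨g, rfl⟩ := cac_is_Dg hD
  constructor
  · exact ⟨pr G (c0 (Dg G g)), c0 (Dg G g), c0_mem_Fbox (Dg_asym g), rfl⟩
  · intro _
    set lL : (E → ℝ) →ₗ[ℝ] ℝ :=
      { toFun := fun y => ip y (G.dm g)
        map_add' := fun a b => ip_add_left a b _
        map_smul' := fun r a => ip_smul_left a _ r } with hlL
    refine ⟨LinearMap.toContinuousLinearMap lL, ?_⟩
    have hco : ∀ y, (LinearMap.toContinuousLinearMap lL) y = ip y (G.dm g) := fun y => rfl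
    rw [BD_eq_argmax g]
    ext x
    rw [Set.mem_sep_iff, Set.mem_sep_iff]
    constructor
    · rintro ⟨h1, h2⟩
      exact ⟨h1, fun y hy => by rw [hco, hco]; exact h2 y hy⟩
    · rintro ⟨h1, h2⟩
      exact ⟨h1, fun y hy => by rw [← hco, ← hco]; exact h2 y hy⟩

lemma face_to_BD {B : Set (E → ℝ)} (hne : B.Nonempty) (hexp : IsExposed ℝ (VorF G 0) B) :
    ∃ g : V → ℝ, B = BD G (Dg G g) := by
  obtain ⟨l, hl⟩ := hexp hne
  set w : E → ℝ := fun e => l (Pi.single e 1) with hw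
  have hfeq : ∀ y, l y = ip y w := fun y => by
    have := lin_eq (l.toLinearMap) y
    simpa [ip] using this
  obtain ⟨g, hg⟩ := pr_mem G w
  refine ⟨g, ?_⟩
  rw [hl, BD_eq_argmax g]
  have hvor : ∀ x ∈ VorF G 0, l x = ip x (G.dm g) := by
    intro x hx
    obtain ⟨fx, hfx⟩ := ((vor_iff x).1 hx).1
    rw [hfeq, ← hfx, ← ip_dm_pr G fx w, ← hg]
  ext x
  rw [Set.mem_sep_iff, Set.mem_sep_iff]
  constructor
  · rintro ⟨hxv, hmax⟩
    exact ⟨hxv, fun y hy => by rw [← hvor x hxv, ← hvor y hy]; exact hmax y hy⟩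
  · rintro ⟨hxv, hmax⟩
    exact ⟨hxv, fun y hy => by rw [hvor x hxv, hvor y hy]; exact hmax y hy⟩

lemma face_char {B : Set (E → ℝ)} (hB : B.Nonempty ∧ IsExposed ℝ (VorF G 0) B) :
    IsCAC G (Drec G B) ∧ BD G (Drec G B) = B := by
  obtain ⟨g, rfl⟩ := face_to_BD hB.1 hB.2
  rw [drec_BD]
  exact ⟨isCAC_Dg g, rfl⟩

lemma drec_BD_cac {D : Set (E × Bool)} (hD : IsCAC G D) : Drec G (BD G D) = D := by
  obtain ⟨g, rfl⟩ := cac_is_Dg hD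
  exact drec_BD g

end S10

end Aux

/-- Theorem A: the poset of nonempty faces of the Voronoi cell
`Vor_F(O)`, ordered by inclusion, is isomorphic to the poset `CAC` of coherent acyclic
orientations of cut subgraphs of `G`, ordered by `D₁ ⪯ D₂ ↔ 𝔼(D₂) ⊆ 𝔼(D₁)`. -/
theorem stmt10 (G : Multigraph V E) (hG : G.Conn) :
    ∃ φ : {B : Set (E → ℝ) // B.Nonempty ∧ IsExposed ℝ (VorF G 0) B} ≃
          {D : Set (E × Bool) // IsCAC G D},
      ∀ a b, a.1 ⊆ b.1 ↔ (φ b).1 ⊆ (φ a).1 := by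
  classical
  refine ⟨{ toFun := fun B => ⟨S10.Drec G B.1, (S10.face_char B.2).1⟩
            invFun := fun D => ⟨S10.BD G D.1, S10.BD_face D.2⟩
            left_inv := fun B => Subtype.ext (S10.face_char B.2).2
            right_inv := fun D => Subtype.ext (S10.drec_BD_cac D.2) }, ?_⟩
  intro a b
  constructor
  · intro hab
    exact S10.Drec_antimono hab
  · intro h
    have h2 := S10.BD_antimono (G := G) h
    have ha : S10.BD G (S10.Drec G a.1) = a.1 := (S10.face_char a.2).2
    have hb : S10.BD G (S10.Drec G b.1) = b.1 := (S10.face_char b.2).2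
    simp only [Equiv.coe_fn_mk] at h2
    rwa [ha, hb] at h2
end

section
/- Let 𝔠 be a generalized cut of G with underlying ordered partition V₁, …, V_s, and for each j let c_j denote the number of connected components of the induced subgraph G[V_j]. Then s − 1 ≤ κ(𝔠) ≤ (Σ_{j=1}^{s} c_j) − 1. -/
open Finset
open scoped Classical

section AuxComp
open SimpleGraph Set
open scoped Classical
set_option linter.unusedSectionVars false
set_option linter.unusedVariables false

variable {V : Type} [Finite V] {H : SimpleGraph V}

def inclHom (H : SimpleGraph V) (S : Set V) : H.induce S →g H := ⟨Subtype.val, fun h => h⟩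

noncomputable def ncc (H : SimpleGraph V) (S : Set V) : ℕ :=
  Nat.card (H.induce S).ConnectedComponent

def cmk (H : SimpleGraph V) {S : Set V} (v : V) (hv : v ∈ S) :
    (H.induce S).ConnectedComponent := (H.induce S).connectedComponentMk ⟨v, hv⟩

def adjC (H : SimpleGraph V) (S : Set V) (y : V) : Set (H.induce S).ConnectedComponent :=
  {c | ∃ u, ∃ hu : u ∈ S, H.Adj y u ∧ cmk H u hu = c}

lemma reach_mono {S T : Set V} (hST : S ⊆ T) {a b : V} {ha : a ∈ S} {hb : b ∈ S}
    (h : (H.induce S).Reachable ⟨a, ha⟩ ⟨b, hb⟩) {ha' : a ∈ T} {hb' : b ∈ T} :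
    (H.induce T).Reachable ⟨a, ha'⟩ ⟨b, hb'⟩ :=
  h.map (H.induceHomOfLE hST).toHom

lemma cmk_mono {S T : Set V} (hST : S ⊆ T) {a b : V} {ha : a ∈ S} {hb : b ∈ S}
    (h : cmk H a ha = cmk H b hb) {ha' : a ∈ T} {hb' : b ∈ T} :
    cmk H a ha' = cmk H b hb' :=
  ConnectedComponent.sound (reach_mono hST (ConnectedComponent.exact h))

/-- upward map on components -/
noncomputable def upMap (H : SimpleGraph V) {S T : Set V} (hST : S ⊆ T) :
    (H.induce S).ConnectedComponent → (H.induce T).ConnectedComponent :=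
  ConnectedComponent.map (H.induceHomOfLE hST).toHom

lemma upMap_cmk {S T : Set V} (hST : S ⊆ T) {a : V} (ha : a ∈ S) :
    upMap H hST (cmk H a ha) = cmk H a (hST ha) := rfl

-- ambient walk lemmas
lemma walk_of_reach {S : Set V} {a b : V} {ha : a ∈ S} {hb : b ∈ S}
    (h : (H.induce S).Reachable ⟨a, ha⟩ ⟨b, hb⟩) :
    ∃ w : H.Walk a b, ∀ x ∈ w.support, x ∈ S := by
  obtain ⟨w⟩ := h
  refine ⟨w.map (inclHom H S), ?_⟩
  intro x hx
  replace hx : x ∈ (w.map (inclHom H S)).support := hx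
  rw [SimpleGraph.Walk.support_map, List.mem_map] at hx
  obtain ⟨p, _, rfl⟩ := hx
  exact p.2

lemma reach_of_walk {S : Set V} : ∀ {a b : V} (w : H.Walk a b),
    (∀ x ∈ w.support, x ∈ S) → ∀ (ha : a ∈ S) (hb : b ∈ S),
    (H.induce S).Reachable ⟨a, ha⟩ ⟨b, hb⟩ := by
  intro a b w
  induction w with
  | nil => intro _ ha hb; rfl
  | @cons u c d h p ih =>
    intro hw ha hb
    have hc : c ∈ S := hw c (by simp)
    have hadj : (H.induce S).Adj ⟨u, ha⟩ ⟨c, hc⟩ := h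
    exact hadj.reachable.trans (ih (fun x hx => hw x (by simp [hx])) hc hb)

lemma first_visit {B : Set V} : ∀ {b y : V} (w : H.Walk b y),
    y ∉ B → (∀ x ∈ w.support, x ∈ insert y B) → b ∈ B →
    ∃ u, ∃ hu : u ∈ B, H.Adj y u ∧ ∃ w' : H.Walk b u, ∀ x ∈ w'.support, x ∈ B := by
  intro b y w
  induction w with
  | nil => intro hy _ hb; exact absurd hb hy
  | @cons u c d h p ih =>
    intro hy hw hb
    by_cases hc : c = d
    · subst hc
      exact ⟨u, hb, (by exact h.symm), SimpleGraph.Walk.nil, by simpa using hb⟩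
    · have hcB : c ∈ B := by
        rcases hw c (by simp) with h1 | h1
        · exact absurd h1 hc
        · exact h1
      obtain ⟨u', hu', hadj, w', hw'⟩ := ih hy (fun x hx => hw x (by simp [hx])) hcB
      refine ⟨u', hu', hadj, SimpleGraph.Walk.cons h w', ?_⟩
      intro x hx
      rcases (by simpa using hx : x = u ∨ x ∈ w'.support) with rfl | hx
      · exact hb
      · exact hw' x hx

lemma split_walk {B : Set V} {y : V} (hy : y ∉ B) : ∀ {b b' : V} (w : H.Walk b b'),
    (∀ x ∈ w.support, x ∈ insert y B) → b ∈ B → b' ∈ B →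
    (∃ w' : H.Walk b b', ∀ x ∈ w'.support, x ∈ B) ∨
      (∃ u, ∃ hu : u ∈ B, H.Adj y u ∧ ∃ w' : H.Walk b u, ∀ x ∈ w'.support, x ∈ B) := by
  intro b b' w
  induction w with
  | nil => intro _ hb _; exact Or.inl ⟨SimpleGraph.Walk.nil, by simpa using hb⟩
  | @cons u c d h p ih =>
    intro hw hb hb'
    by_cases hc : c = y
    · subst hc
      exact Or.inr ⟨u, hb, h.symm, SimpleGraph.Walk.nil, by simpa using hb⟩
    · have hcB : c ∈ B := by
        rcases hw c (by simp) with h1 | h1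
        · exact absurd h1 hc
        · exact h1
      rcases ih (fun x hx => hw x (by simp [hx])) hcB hb' with ⟨w', hw'⟩ | ⟨u', hu', hadj, w', hw'⟩
      · refine Or.inl ⟨SimpleGraph.Walk.cons h w', ?_⟩
        intro x hx
        rcases (by simpa using hx : x = u ∨ x ∈ w'.support) with rfl | hx
        · exact hb
        · exact hw' x hx
      · refine Or.inr ⟨u', hu', hadj, SimpleGraph.Walk.cons h w', ?_⟩
        intro x hx
        rcases (by simpa using hx : x = u ∨ x ∈ w'.support) with rfl | hx
        · exact hb
        · exact hw' x hx

/-- key reachability consequence: if two B-vertices are connected in `insert y B`,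
then either they are connected in B, or the first one reaches a neighbor of y inside B. -/
lemma reach_insert_cases {B : Set V} {y : V} (hy : y ∉ B) {b b' : V} (hb : b ∈ B) (hb' : b' ∈ B)
    (h : (H.induce (insert y B)).Reachable ⟨b, mem_insert_of_mem y hb⟩ ⟨b', mem_insert_of_mem y hb'⟩) :
    cmk H b hb = cmk H b' hb' ∨ cmk H b hb ∈ adjC H B y := by
  obtain ⟨w, hw⟩ := walk_of_reach h
  rcases split_walk hy w hw hb hb' with ⟨w', hw'⟩ | ⟨u, hu, hadj, w', hw'⟩
  · exact Or.inl (ConnectedComponent.sound (reach_of_walk w' hw' hb hb'))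
  · exact Or.inr ⟨u, hu, hadj, (ConnectedComponent.sound (reach_of_walk w' hw' hb hu)).symm⟩

lemma reach_y_adjC {B : Set V} {y : V} (hy : y ∉ B) {b : V} (hb : b ∈ B)
    (h : (H.induce (insert y B)).Reachable ⟨b, mem_insert_of_mem y hb⟩ ⟨y, mem_insert y B⟩) :
    cmk H b hb ∈ adjC H B y := by
  obtain ⟨w, hw⟩ := walk_of_reach h
  obtain ⟨u, hu, hadj, w', hw'⟩ := first_visit w hy hw hb
  exact ⟨u, hu, hadj, (ConnectedComponent.sound (reach_of_walk w' hw' hb hu)).symm⟩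

lemma adjC_reach_y {B : Set V} {y : V} {b : V} (hb : b ∈ B)
    (h : cmk H b hb ∈ adjC H B y) :
    (H.induce (insert y B)).Reachable ⟨b, mem_insert_of_mem y hb⟩ ⟨y, mem_insert y B⟩ := by
  obtain ⟨u, hu, hadj, hc⟩ := h
  have h1 : (H.induce (insert y B)).Reachable ⟨b, mem_insert_of_mem y hb⟩ ⟨u, mem_insert_of_mem y hu⟩ :=
    reach_mono (subset_insert y B) (ConnectedComponent.exact hc.symm)
  have h2 : (H.induce (insert y B)).Adj ⟨u, mem_insert_of_mem y hu⟩ ⟨y, mem_insert y B⟩ := hadj.symm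
  exact h1.trans h2.reachable

lemma not_adj_upMap_ne {B : Set V} {y : V} (hy : y ∉ B) {c : (H.induce B).ConnectedComponent}
    (h1 : c ∉ adjC H B y) : upMap H (subset_insert y B) c ≠ cmk H y (mem_insert y B) := by
  obtain ⟨⟨b, hb⟩, rfl⟩ := Quot.exists_rep c
  intro hfe
  have hre : (H.induce (insert y B)).Reachable ⟨b, mem_insert_of_mem y hb⟩
      ⟨y, mem_insert y B⟩ := ConnectedComponent.exact hfe
  exact h1 (reach_y_adjC hy hb hre)

lemma upMap_inj {B : Set V} {y : V} (hy : y ∉ B) {c c' : (H.induce B).ConnectedComponent}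
    (h1 : c ∉ adjC H B y)
    (h : upMap H (subset_insert y B) c = upMap H (subset_insert y B) c') : c = c' := by
  obtain ⟨⟨b, hb⟩, rfl⟩ := Quot.exists_rep c
  obtain ⟨⟨b', hb'⟩, rfl⟩ := Quot.exists_rep c'
  have hre : (H.induce (insert y B)).Reachable ⟨b, mem_insert_of_mem y hb⟩
      ⟨b', mem_insert_of_mem y hb'⟩ := ConnectedComponent.exact h
  rcases reach_insert_cases hy hb hb' hre with h2 | h2
  · exact h2
  · exact absurd h2 h1

lemma VA_le {B : Set V} {y : V} (hy : y ∉ B) :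
    ncc H B + 1 ≤ ncc H (insert y B) + Nat.card (adjC H B y) := by
  classical
  let f : (H.induce B).ConnectedComponent ⊕ Unit →
      (H.induce (insert y B)).ConnectedComponent ⊕ (adjC H B y) := fun z =>
    match z with
    | Sum.inl c => if h : c ∈ adjC H B y then Sum.inr ⟨c, h⟩
        else Sum.inl (upMap H (subset_insert y B) c)
    | Sum.inr _ => Sum.inl (cmk H y (mem_insert y B))
  have hinj : Function.Injective f := by
    rintro (c | u) (c' | u') hfe <;> simp only [f] at hfe
    · by_cases h1 : c ∈ adjC H B y <;> by_cases h2 : c' ∈ adjC H B y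
      · rw [dif_pos h1, dif_pos h2] at hfe
        exact congrArg (fun z => Sum.inl (Subtype.val z))
          (show (⟨c, h1⟩ : adjC H B y) = ⟨c', h2⟩ from Sum.inr.inj hfe) |>.symm ▸ rfl
      · rw [dif_pos h1, dif_neg h2] at hfe; exact absurd hfe (by simp)
      · rw [dif_neg h1, dif_pos h2] at hfe; exact absurd hfe (by simp)
      · rw [dif_neg h1, dif_neg h2] at hfe
        exact congrArg Sum.inl (upMap_inj hy h1 (Sum.inl.inj hfe))
    · by_cases h1 : c ∈ adjC H B y
      · rw [dif_pos h1] at hfe; exact absurd hfe (by simp)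
      · rw [dif_neg h1] at hfe
        exact absurd (Sum.inl.inj hfe) (not_adj_upMap_ne hy h1)
    · by_cases h1 : c' ∈ adjC H B y
      · rw [dif_pos h1] at hfe; exact absurd hfe (by simp)
      · rw [dif_neg h1] at hfe
        exact absurd (Sum.inl.inj hfe).symm (not_adj_upMap_ne hy h1)
    · rfl
  have hcard := Nat.card_le_card_of_injective f hinj
  simpa [Nat.card_sum, ncc] using hcard

lemma VA_ge {B : Set V} {y : V} (hy : y ∉ B) :
    ncc H (insert y B) + Nat.card (adjC H B y) ≤ ncc H B + 1 := by
  classical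
  let g : ↥(insert y B) → (H.induce B).ConnectedComponent ⊕ Unit := fun p =>
    if (H.induce (insert y B)).Reachable p ⟨y, mem_insert y B⟩ then Sum.inr ()
    else if h : (p : V) ∈ B then Sum.inl (cmk H (p : V) h) else Sum.inr ()
  have hmemB : ∀ (p : ↥(insert y B)),
      ¬ (H.induce (insert y B)).Reachable p ⟨y, mem_insert y B⟩ → (p : V) ∈ B := by
    rintro ⟨v, hv⟩ hnr
    rcases hv with rfl | hvB
    · exact absurd (Reachable.refl _) hnr
    · exact hvB
  have hg : ∀ (v w : ↥(insert y B)) (p : (H.induce (insert y B)).Walk v w), p.IsPath →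
      g v = g w := by
    intro v w p hp
    have hvw : (H.induce (insert y B)).Reachable v w := p.reachable
    by_cases hv : (H.induce (insert y B)).Reachable v ⟨y, mem_insert y B⟩
    · have hw : (H.induce (insert y B)).Reachable w ⟨y, mem_insert y B⟩ := hvw.symm.trans hv
      simp [g, hv, hw]
    · have hw : ¬ (H.induce (insert y B)).Reachable w ⟨y, mem_insert y B⟩ := fun hw =>
        hv (hvw.trans hw)
      have hvB := hmemB v hv
      have hwB := hmemB w hw
      have hvw' : (H.induce (insert y B)).Reachable ⟨(v : V), mem_insert_of_mem y hvB⟩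
          ⟨(w : V), mem_insert_of_mem y hwB⟩ := hvw
      rcases reach_insert_cases hy hvB hwB hvw' with h | h
      · simp only [g, if_neg hv, if_neg hw, dif_pos hvB, dif_pos hwB, h]
      · exact absurd (adjC_reach_y hvB h) (by exact hv)
  have hg1 : ∀ d : (H.induce (insert y B)).ConnectedComponent,
      ConnectedComponent.lift g hg d = Sum.inr () → d = cmk H y (mem_insert y B) := by
    intro d
    obtain ⟨p, rfl⟩ := Quot.exists_rep d
    intro h
    by_cases hr : (H.induce (insert y B)).Reachable p ⟨y, mem_insert y B⟩
    · exact ConnectedComponent.sound hr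
    · have h' : g p = Sum.inr () := h
      have hpB := hmemB p hr
      rw [show g p = if h : (p : V) ∈ B then Sum.inl (cmk H (p : V) h) else Sum.inr ()
          from if_neg hr, dif_pos hpB] at h'
      exact absurd h' (by simp)
  have hg2 : ∀ (d : (H.induce (insert y B)).ConnectedComponent)
      (c : (H.induce B).ConnectedComponent),
      ConnectedComponent.lift g hg d = Sum.inl c →
      upMap H (subset_insert y B) c = d ∧ c ∉ adjC H B y := by
    intro d c
    obtain ⟨p, rfl⟩ := Quot.exists_rep d
    intro h
    have h' : g p = Sum.inl c := h
    by_cases hr : (H.induce (insert y B)).Reachable p ⟨y, mem_insert y B⟩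
    · rw [show g p = Sum.inr () from if_pos hr] at h'
      exact absurd h' (by simp)
    · have hpB := hmemB p hr
      rw [show g p = if h : (p : V) ∈ B then Sum.inl (cmk H (p : V) h) else Sum.inr ()
          from if_neg hr, dif_pos hpB] at h'
      have hc : c = cmk H (p : V) hpB := (Sum.inl.inj h').symm
      subst hc
      constructor
      · rfl
      · intro hadj
        exact hr (adjC_reach_y hpB hadj)
  let f : (H.induce (insert y B)).ConnectedComponent ⊕ (adjC H B y) →
      (H.induce B).ConnectedComponent ⊕ Unit := fun z =>
    match z with
    | Sum.inl d => ConnectedComponent.lift g hg d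
    | Sum.inr c => Sum.inl (c : (H.induce B).ConnectedComponent)
  have hinj : Function.Injective f := by
    rintro (d | ⟨c, hc⟩) (d' | ⟨c', hc'⟩) hfe <;> simp only [f] at hfe
    · cases hld : ConnectedComponent.lift g hg d with
      | inl c =>
        cases hld' : ConnectedComponent.lift g hg d' with
        | inl c' =>
          rw [hld, hld'] at hfe
          have hcc : c = c' := Sum.inl.inj hfe
          subst hcc
          rw [← (hg2 d c hld).1, ← (hg2 d' c hld').1]
        | inr u =>
          rw [hld, hld'] at hfe
          exact absurd hfe (by simp)
      | inr u =>
        cases hld' : ConnectedComponent.lift g hg d' with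
        | inl c' =>
          rw [hld, hld'] at hfe
          exact absurd hfe (by simp)
        | inr u' =>
          rw [hg1 d hld, hg1 d' hld']
    · cases hld : ConnectedComponent.lift g hg d with
      | inl c2 =>
        rw [hld] at hfe
        have := Sum.inl.inj hfe
        subst this
        exact absurd hc' (hg2 d c2 hld).2
      | inr u =>
        rw [hld] at hfe
        exact absurd hfe (by simp)
    · cases hld : ConnectedComponent.lift g hg d' with
      | inl c2 =>
        rw [hld] at hfe
        have := Sum.inl.inj hfe
        subst this
        exact absurd hc (hg2 d' c hld).2
      | inr u =>
        rw [hld] at hfe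
        exact absurd hfe (by simp)
    · exact congrArg Sum.inr (Subtype.ext (Sum.inl.inj hfe))
  have hcard := Nat.card_le_card_of_injective f hinj
  simpa [Nat.card_sum, ncc] using hcard

lemma adjC_card_le {X A : Set V} {y : V} (hXy : ∀ u, H.Adj y u → u ∉ X) :
    Nat.card (adjC H (X ∪ A) y) ≤ Nat.card (adjC H A y) := by
  classical
  have hAsub : A ⊆ X ∪ A := subset_union_right
  let σ : adjC H A y → adjC H (X ∪ A) y := fun c =>
    ⟨upMap H hAsub c.1, by
      obtain ⟨u, hu, hadj, hc⟩ := c.2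
      exact ⟨u, Or.inr hu, hadj, by rw [← hc]; rfl⟩⟩
  apply Nat.card_le_card_of_surjective σ
  rintro ⟨d, u, hu, hadj, hd⟩
  have huA : u ∈ A := by
    rcases hu with h | h
    · exact absurd h (hXy u hadj)
    · exact h
  refine ⟨⟨cmk H u huA, ⟨u, huA, hadj, rfl⟩⟩, ?_⟩
  apply Subtype.ext
  show upMap H hAsub (cmk H u huA) = d
  rw [← hd]; rfl

lemma ncc_univ (hH : H.Connected) : ncc H univ = 1 := by
  have h1 : Nat.card H.ConnectedComponent = 1 := by
    rw [Nat.card_eq_one_iff_unique]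
    exact ⟨hH.preconnected.subsingleton_connectedComponent,
      ⟨H.connectedComponentMk hH.nonempty.some⟩⟩
  rw [ncc, Nat.card_congr (induceUnivIso H).connectedComponentEquiv, h1]

lemma one_le_ncc {S : Set V} (hS : S.Nonempty) : 1 ≤ ncc H S := by
  obtain ⟨v, hv⟩ := hS
  have : Nonempty (H.induce S).ConnectedComponent := ⟨cmk H v hv⟩
  exact Nat.card_pos

lemma keyC (hH : H.Connected) : ∀ (n : ℕ) (X A Y : Set V), Y.ncard = n →
    X ∪ A ∪ Y = univ → Disjoint X Y → Disjoint A Y →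
    (∀ u v, u ∈ X → v ∈ Y → ¬ H.Adj u v) →
    ncc H (X ∪ A) + ncc H (A ∪ Y) ≤ ncc H A + 1 := by
  intro n
  induction n with
  | zero =>
    intro X A Y hY hcov _ _ _
    have hYe : Y = ∅ := (Set.ncard_eq_zero (Set.toFinite Y)).mp hY
    subst hYe
    have hXA : X ∪ A = univ := by rwa [union_empty] at hcov
    rw [hXA, union_empty, ncc_univ hH]
    omega
  | succ n ih =>
    intro X A Y hY hcov hXY hAY hE
    have hYne : Y.Nonempty := Set.nonempty_of_ncard_ne_zero (by omega)
    obtain ⟨y, hy⟩ := hYne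
    have hY' : (Y \ {y}).ncard = n := by
      rw [Set.ncard_diff_singleton_of_mem hy, hY]; omega
    have hyX : y ∉ X := Set.disjoint_right.mp hXY hy
    have hyA : y ∉ A := Set.disjoint_right.mp hAY hy
    have hyXA : y ∉ X ∪ A := by simp [hyX, hyA]
    have hcov' : X ∪ insert y A ∪ (Y \ {y}) = Set.univ := by
      rw [Set.eq_univ_iff_forall] at hcov ⊢
      intro x
      by_cases hxy : x = y
      · subst hxy; exact Or.inl (Or.inr (mem_insert _ _))
      · rcases hcov x with (h | h) | h
        · exact Or.inl (Or.inl h)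
        · exact Or.inl (Or.inr (mem_insert_of_mem y h))
        · exact Or.inr ⟨h, hxy⟩
    have hXY' : Disjoint X (Y \ {y}) := hXY.mono_right diff_subset
    have hAY' : Disjoint (insert y A) (Y \ {y}) := by
      rw [Set.disjoint_left]
      rintro a (rfl | haA) haY'
      · exact haY'.2 rfl
      · exact Set.disjoint_left.mp hAY haA haY'.1
    have hE' : ∀ u v, u ∈ X → v ∈ Y \ {y} → ¬ H.Adj u v := fun u v hu hv =>
      hE u v hu hv.1
    have ih' := ih X (insert y A) (Y \ {y}) hY' hcov' hXY' hAY' hE'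
    have heq1 : X ∪ insert y A = insert y (X ∪ A) := Set.union_insert
    have heq2 : insert y A ∪ (Y \ {y}) = A ∪ Y := by
      ext x
      simp only [Set.mem_union, Set.mem_insert_iff, Set.mem_diff, Set.mem_singleton_iff]
      constructor
      · rintro ((rfl | h) | ⟨h, _⟩)
        · exact Or.inr hy
        · exact Or.inl h
        · exact Or.inr h
      · rintro (h | h)
        · exact Or.inl (Or.inr h)
        · by_cases hxy : x = y
          · exact Or.inl (Or.inl hxy)
          · exact Or.inr ⟨h, hxy⟩
    rw [heq1, heq2] at ih'
    have va1 := VA_le (H := H) (B := X ∪ A) hyXA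
    have va2 := VA_ge (H := H) (B := A) hyA
    have kle := adjC_card_le (H := H) (X := X) (A := A) (y := y)
      (fun u hadj hu => hE u y hu hy hadj.symm)
    omega

lemma level_ineq {s : ℕ} (hH : H.Connected) (P : V → Fin s)
    (hadj : ∀ u v, H.Adj u v → ((P u : ℕ) ≤ (P v : ℕ) + 1 ∧ (P v : ℕ) ≤ (P u : ℕ) + 1))
    (i : ℕ) :
    ncc H {v | (P v : ℕ) ≤ i} + ncc H {v | i ≤ (P v : ℕ)} ≤ ncc H {v | (P v : ℕ) = i} + 1 := by
  have h1 : {v | (P v : ℕ) ≤ i} = {v | (P v : ℕ) < i} ∪ {v | (P v : ℕ) = i} := by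
    ext v; simp only [Set.mem_union, Set.mem_setOf_eq]; omega
  have h2 : {v | i ≤ (P v : ℕ)} = {v | (P v : ℕ) = i} ∪ {v | i < (P v : ℕ)} := by
    ext v; simp only [Set.mem_union, Set.mem_setOf_eq]; omega
  rw [h1, h2]
  apply keyC hH _ _ _ _ rfl
  · rw [Set.eq_univ_iff_forall]
    intro v
    simp only [Set.mem_union, Set.mem_setOf_eq]
    omega
  · rw [Set.disjoint_left]
    intro a ha ha'
    simp only [Set.mem_setOf_eq] at ha ha'
    omega
  · rw [Set.disjoint_left]
    intro a ha ha'
    simp only [Set.mem_setOf_eq] at ha ha'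
    omega
  · intro u v hu hv hA
    have := hadj u v hA
    simp only [Set.mem_setOf_eq] at hu hv
    omega

lemma arith (t : ℕ) (l r r' c : ℕ → ℕ)
    (key : ∀ i, i < t + 1 → l i + r' i ≤ c i + 1)
    (hl1 : ∀ i, i < t → 1 ≤ l i) (hr1 : ∀ i, i < t → 1 ≤ r i)
    (hlt : l t = 1) (hr'0 : r' 0 = 1) (hr's : ∀ i, r' (i + 1) = r i) :
    t ≤ ∑ i ∈ Finset.range t, (l i + r i - 1) ∧
      ∑ i ∈ Finset.range t, (l i + r i - 1) ≤ (∑ i ∈ Finset.range (t + 1), c i) - 1 := by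
  have EL : ∑ i ∈ Finset.range (t + 1), (l i + r' i) =
      (∑ i ∈ Finset.range t, l i) + (∑ i ∈ Finset.range t, r i) + 2 := by
    rw [Finset.sum_add_distrib, Finset.sum_range_succ, hlt,
      Finset.sum_range_succ' r', hr'0,
      show ∑ i ∈ Finset.range t, r' (i + 1) = ∑ i ∈ Finset.range t, r i from
        Finset.sum_congr rfl (fun i _ => hr's i)]
    ring
  have ER : ∑ i ∈ Finset.range (t + 1), (c i + 1) =
      (∑ i ∈ Finset.range (t + 1), c i) + (t + 1) := by
    rw [Finset.sum_add_distrib]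
    simp
  have Skey : ∑ i ∈ Finset.range (t + 1), (l i + r' i) ≤
      ∑ i ∈ Finset.range (t + 1), (c i + 1) :=
    Finset.sum_le_sum (fun i hi => key i (Finset.mem_range.mp hi))
  rw [EL, ER] at Skey
  have Hmain : (∑ i ∈ Finset.range t, (l i + r i - 1)) + t =
      (∑ i ∈ Finset.range t, l i) + (∑ i ∈ Finset.range t, r i) := by
    calc (∑ i ∈ Finset.range t, (l i + r i - 1)) + t
        = (∑ i ∈ Finset.range t, (l i + r i - 1)) + ∑ i ∈ Finset.range t, 1 := by simp
      _ = ∑ i ∈ Finset.range t, (l i + r i - 1 + 1) := (Finset.sum_add_distrib).symm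
      _ = ∑ i ∈ Finset.range t, (l i + r i) := Finset.sum_congr rfl (fun i hi => by
          have h1 := hl1 i (Finset.mem_range.mp hi); omega)
      _ = (∑ i ∈ Finset.range t, l i) + (∑ i ∈ Finset.range t, r i) :=
          Finset.sum_add_distrib
  constructor
  · calc t = ∑ i ∈ Finset.range t, 1 := by simp
      _ ≤ ∑ i ∈ Finset.range t, (l i + r i - 1) := Finset.sum_le_sum (fun i hi => by
          have h1 := hl1 i (Finset.mem_range.mp hi)
          have h2 := hr1 i (Finset.mem_range.mp hi)
          omega)
  · have h2 : (∑ i ∈ Finset.range t, (l i + r i - 1) + 1) + (t + 1) ≤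
        (∑ i ∈ Finset.range (t + 1), c i) + (t + 1) := by
      calc (∑ i ∈ Finset.range t, (l i + r i - 1) + 1) + (t + 1)
          = ((∑ i ∈ Finset.range t, (l i + r i - 1)) + t) + 2 := by ring
        _ = ((∑ i ∈ Finset.range t, l i) + (∑ i ∈ Finset.range t, r i)) + 2 := by
            rw [Hmain]
        _ ≤ (∑ i ∈ Finset.range (t + 1), c i) + (t + 1) := Skey
    exact Nat.le_sub_of_add_le (Nat.le_of_add_le_add_right h2)

lemma master {s : ℕ} (hH : H.Connected) (P : V → Fin s) (hs : 2 ≤ s)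
    (hsurj : Function.Surjective P)
    (hadj : ∀ u v, H.Adj u v → ((P u : ℕ) ≤ (P v : ℕ) + 1 ∧ (P v : ℕ) ≤ (P u : ℕ) + 1)) :
    s - 1 ≤ ∑ i ∈ Finset.range (s - 1),
        (ncc H {v | (P v : ℕ) ≤ i} + ncc H {v | i < (P v : ℕ)} - 1) ∧
      ∑ i ∈ Finset.range (s - 1),
        (ncc H {v | (P v : ℕ) ≤ i} + ncc H {v | i < (P v : ℕ)} - 1) ≤
        (∑ j : Fin s, ncc H {v | P v = j}) - 1 := by
  obtain ⟨t, rfl⟩ : ∃ t, s = t + 1 := ⟨s - 1, by omega⟩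
  obtain ⟨v0, hv0⟩ := hsurj ⟨0, by omega⟩
  obtain ⟨v1, hv1⟩ := hsurj ⟨t, by omega⟩
  have hv0' : (P v0 : ℕ) = 0 := by rw [hv0]
  have hv1' : (P v1 : ℕ) = t := by rw [hv1]
  have harith := arith t (fun i => ncc H {v | (P v : ℕ) ≤ i})
    (fun i => ncc H {v | i < (P v : ℕ)}) (fun i => ncc H {v | i ≤ (P v : ℕ)})
    (fun i => ncc H {v | (P v : ℕ) = i})
    (fun i _ => level_ineq hH P hadj i)
    (fun i _ => one_le_ncc ⟨v0, by simp only [Set.mem_setOf_eq, hv0']; omega⟩)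
    (fun i hi => one_le_ncc ⟨v1, by simp only [Set.mem_setOf_eq, hv1']; omega⟩)
    (by
      show ncc H {v | (P v : ℕ) ≤ t} = 1
      have hset : {v | (P v : ℕ) ≤ t} = Set.univ :=
        Set.eq_univ_iff_forall.mpr (fun v => by
          have := (P v).is_lt
          simp only [Set.mem_setOf_eq]
          omega)
      rw [hset, ncc_univ hH])
    (by
      show ncc H {v | 0 ≤ (P v : ℕ)} = 1
      have hset : {v | 0 ≤ (P v : ℕ)} = Set.univ :=
        Set.eq_univ_iff_forall.mpr (fun v => by simp)
      rw [hset, ncc_univ hH])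
    (fun i => congrArg (ncc H) (by
      ext v
      simp only [Set.mem_setOf_eq]
      omega))
  have hN : (∑ j : Fin (t + 1), ncc H {v | P v = j}) =
      ∑ i ∈ Finset.range (t + 1), ncc H {v | (P v : ℕ) = i} := by
    have hptw : ∀ j : Fin (t + 1), ncc H {v | P v = j} = ncc H {v | (P v : ℕ) = (j : ℕ)} :=
      fun j => congrArg (ncc H) (by
        ext v
        simp only [Set.mem_setOf_eq]
        exact ⟨fun h => by rw [h], fun h => Fin.ext h⟩)
    rw [Finset.sum_congr rfl (fun j _ => hptw j)]
    exact Fin.sum_univ_eq_sum_range (fun i => ncc H {v | (P v : ℕ) = i}) (t + 1)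
  simp only [Nat.add_sub_cancel]
  rw [hN]
  exact harith

end AuxComp

variable {V E : Type} [Fintype V] [Fintype E] [DecidableEq V] [DecidableEq E]

/-- The number of connected components of the induced subgraph `G[C]`. -/
noncomputable def ncomp (G : Multigraph V E) (C : Set V) : ℕ :=
  Nat.card (G.adjG.induce C).ConnectedComponent

/-- `P : V → Fin s` encodes a generalized cut of `G`: an ordered partition of `V` into
`s ≥ 2` nonempty parts `V_0 < ⋯ < V_{s-1}` with all crossing edges of `G` between
consecutive parts. -/
def IsGenCut (G : Multigraph V E) {s : ℕ} (P : V → Fin s) : Prop :=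
  2 ≤ s ∧ Function.Surjective P ∧
    ∀ e : E, ((P (G.tail e) : ℕ) ≤ (P (G.head e) : ℕ) + 1 ∧
              (P (G.head e) : ℕ) ≤ (P (G.tail e) : ℕ) + 1)

/-- The rank `κ(𝔠) = Σ_{i=1}^{s-1} (l_i + r_i − 1)` of a generalized cut. -/
noncomputable def cutRank (G : Multigraph V E) {s : ℕ} (P : V → Fin s) : ℕ :=
  ∑ i ∈ Finset.range (s - 1),
    (ncomp G {v | (P v : ℕ) ≤ i} + ncomp G {v | i < (P v : ℕ)} - 1)

/-- for a generalized cut `𝔠` with ordered partition `V₁, …, V_s`,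
we have `s − 1 ≤ κ(𝔠) ≤ (Σ_j c_j) − 1`, where `c_j` is the number of connected
components of `G[V_j]`. -/
theorem stmt14 (G : Multigraph V E) (hG : G.Conn) {s : ℕ} (P : V → Fin s)
    (hP : IsGenCut G P) :
    s - 1 ≤ cutRank G P ∧
      cutRank G P ≤ (∑ j : Fin s, ncomp G {v | P v = j}) - 1 := by
  obtain ⟨hs2, hsurj, hedge⟩ := hP
  have hadj : ∀ u v, G.adjG.Adj u v →
      ((P u : ℕ) ≤ (P v : ℕ) + 1 ∧ (P v : ℕ) ≤ (P u : ℕ) + 1) := by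
    intro u v huv
    rw [Multigraph.adjG, SimpleGraph.fromRel_adj] at huv
    rcases huv.2 with ⟨e, he1, he2⟩ | ⟨e, he1, he2⟩
    · have h := hedge e
      rw [he1, he2] at h
      exact h
    · have h := hedge e
      rw [he1, he2] at h
      exact ⟨h.2, h.1⟩
  have hm := master (H := G.adjG) hG P hs2 hsurj hadj
  exact hm
end
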